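/- Let X be a set, h : X → ℝ with the Northcott property (every sublevel set {y : h(y) ≤ M} is finite), and let c ≥ 0. Then the set of points x ∈ X for which there exists a sequence (f_i) of self-maps of X with integers d_i ≥ 2 and sup_{i,y} |h(f_i(y))/d_i − h(y)| ≤ c such that x has finite forward orbit under (f_i), is finite. In fact this set is contained in {y ∈ X : h(y) ≤ 2c}. -/

import Mathlib

open Filter Finset

/-- `orbitFrom f k n x = f (k+n) (⋯ (f (k+1) x))`, the composite applying `f (k+1)` first. -/
def orbitFrom {X : Type*} (f : ℕ → X → X) (k : ℕ) : ℕ → X → X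
  | 0 => fun x => x
  | n + 1 => fun x => f (k + n + 1) (orbitFrom f k n x)

/-- `prodFrom d k n = d (k+1) * ⋯ * d (k+n)`. -/
def prodFrom (d : ℕ → ℕ) (k n : ℕ) : ℕ := ∏ i ∈ Finset.range n, d (k + i + 1)

theorem stmt8 {X : Type*} (h : X → ℝ)
    (hNorthcott : ∀ M : ℝ, {y : X | h y ≤ M}.Finite) (c : ℝ) (hc : 0 ≤ c) :
    {x : X | ∃ (f : ℕ → X → X) (d : ℕ → ℕ), (∀ i, 2 ≤ d i) ∧
        (∀ i y, |h (f i y) / (d i : ℝ) - h y| ≤ c) ∧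
        (Set.range fun n => orbitFrom f 0 n x).Finite} ⊆ {y : X | h y ≤ 2 * c} ∧
    {x : X | ∃ (f : ℕ → X → X) (d : ℕ → ℕ), (∀ i, 2 ≤ d i) ∧
        (∀ i y, |h (f i y) / (d i : ℝ) - h y| ≤ c) ∧
        (Set.range fun n => orbitFrom f 0 n x).Finite}.Finite := by
  have hsub : {x : X | ∃ (f : ℕ → X → X) (d : ℕ → ℕ), (∀ i, 2 ≤ d i) ∧
        (∀ i y, |h (f i y) / (d i : ℝ) - h y| ≤ c) ∧
        (Set.range fun n => orbitFrom f 0 n x).Finite} ⊆ {y : X | h y ≤ 2 * c} := by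
    rintro x ⟨f, d, hd, hest, hfin⟩
    by_contra hx
    simp only [Set.mem_setOf_eq, not_le] at hx
    -- growth along the orbit
    have key : ∀ n : ℕ, (2 : ℝ) ^ n * (h x - 2 * c) ≤ h (orbitFrom f 0 n x) - 2 * c := by
      intro n
      induction n with
      | zero => simp [orbitFrom]
      | succ n ih =>
        set y := orbitFrom f 0 n x with hy
        have hε : 0 < h x - 2 * c := by linarith
        have hypos : 0 < h y - 2 * c :=
          lt_of_lt_of_le (by positivity) ih
        have hstep := hest (0 + n + 1) y
        have habs : h y - c ≤ h (f (0 + n + 1) y) / (d (0 + n + 1) : ℝ) := by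
          have := abs_le.mp hstep
          linarith [this.1]
        have hdpos : (0 : ℝ) < (d (0 + n + 1) : ℝ) := by
          have := hd (0 + n + 1); positivity
        have h2d : (2 : ℝ) ≤ (d (0 + n + 1) : ℝ) := by exact_mod_cast hd (0 + n + 1)
        have hyc : 0 ≤ h y - c := by linarith
        have h1 : (d (0 + n + 1) : ℝ) * (h y - c) ≤ h (f (0 + n + 1) y) := by
          have hne : (d (n + 1) : ℝ) ≠ 0 := by
            have := hd (n + 1); positivity
          have := (div_le_div_iff₀ hdpos hdpos).mp (by
            calc (d (0 + n + 1) : ℝ) * (h y - c) / (d (0 + n + 1) : ℝ)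
                = h y - c := by field_simp [hne]
              _ ≤ h (f (0 + n + 1) y) / (d (0 + n + 1) : ℝ) := habs)
          nlinarith
        have h2 : (2 : ℝ) * (h y - c) ≤ (d (0 + n + 1) : ℝ) * (h y - c) :=
          mul_le_mul_of_nonneg_right h2d hyc
        have : (2 : ℝ) * (h y - c) ≤ h (orbitFrom f 0 (n + 1) x) := by
          simpa [orbitFrom, hy] using le_trans h2 h1
        have hpow : (2 : ℝ) ^ (n + 1) * (h x - 2 * c) = 2 * ((2 : ℝ) ^ n * (h x - 2 * c)) := by
          ring
        linarith
    -- orbit height is bounded since the orbit is finite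
    obtain ⟨B, hB⟩ := (hfin.image h).bddAbove
    have hBn : ∀ n, h (orbitFrom f 0 n x) ≤ B := fun n =>
      hB ⟨orbitFrom f 0 n x, ⟨n, rfl⟩, rfl⟩
    have hε : 0 < h x - 2 * c := by linarith
    obtain ⟨n, hn⟩ := pow_unbounded_of_one_lt ((B - 2 * c) / (h x - 2 * c)) (by norm_num : (1:ℝ) < 2)
    have : (B - 2 * c) < 2 ^ n * (h x - 2 * c) := by
      rwa [div_lt_iff₀ hε] at hn
    have := key n
    have := hBn n
    linarith
  exact ⟨hsub, (hNorthcott (2 * c)).subset hsub⟩
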